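/- arXiv:2011.14779 — 2 statements merged into one kernel-verified Lean document; each statement's English description precedes it below -/
import Mathlib

section
/- For the softmax Jacobian J (with J_{ij} = δ_{ij} S_i - S_i S_j, S a strictly positive probability vector) and any vector Z, the Euclidean norm of J Z is at most the Euclidean norm of Z: ‖J Z‖ ≤ ‖Z‖. -/
/-- The softmax Jacobian is a contraction for the Euclidean norm: `‖J Z‖ ≤ ‖Z‖`. -/
theorem softmax_jacobian_mulVec_norm_le (K : ℕ) (S : Fin K → ℝ)
    (hpos : ∀ i, 0 < S i) (hsum : ∑ i, S i = 1)
    (J : Matrix (Fin K) (Fin K) ℝ)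
    (hJ : ∀ i j, J i j = (if i = j then S i else 0) - S i * S j)
    (Z : EuclideanSpace ℝ (Fin K)) :
    ‖(WithLp.equiv 2 (Fin K → ℝ)).symm (J.mulVec ((WithLp.equiv 2 (Fin K → ℝ)) Z))‖ ≤ ‖Z‖ := by
  have hS1 : ∀ i, S i ≤ 1 := by
    intro i
    rw [← hsum]
    exact Finset.single_le_sum (fun j _ => (hpos j).le) (Finset.mem_univ i)
  set z : Fin K → ℝ := (WithLp.equiv 2 (Fin K → ℝ)) Z with hz
  set m : ℝ := ∑ j, S j * z j with hm
  have hmv : ∀ i, J.mulVec z i = S i * (z i - m) := by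
    intro i
    have h1 : ∑ j, S i * S j * z j = S i * m := by
      rw [hm, Finset.mul_sum]
      exact Finset.sum_congr rfl fun j _ => by ring
    simp only [Matrix.mulVec, dotProduct, hJ, sub_mul, ite_mul, zero_mul,
      Finset.sum_sub_distrib, Finset.sum_ite_eq, Finset.mem_univ, if_true, h1]
    ring
  have key : ∑ i, (J.mulVec z i) ^ 2 ≤ ∑ i, (z i) ^ 2 := by
    simp_rw [hmv]
    calc ∑ i, (S i * (z i - m)) ^ 2
        ≤ ∑ i, S i * (z i - m) ^ 2 :=
          Finset.sum_le_sum fun i _ => by nlinarith [hpos i, hS1 i, sq_nonneg (z i - m)]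
      _ = (∑ i, S i * z i ^ 2) - m ^ 2 := by
          have h : ∀ i ∈ Finset.univ, S i * (z i - m) ^ 2
              = S i * z i ^ 2 - 2 * m * (S i * z i) + m ^ 2 * S i := fun i _ => by ring
          rw [Finset.sum_congr rfl h]
          simp_rw [Finset.sum_add_distrib, Finset.sum_sub_distrib, ← Finset.mul_sum, ← hm, hsum]
          ring
      _ ≤ ∑ i, z i ^ 2 := by
          have h1 : ∑ i, S i * z i ^ 2 ≤ ∑ i, z i ^ 2 :=
            Finset.sum_le_sum fun i _ => by nlinarith [hpos i, hS1 i, sq_nonneg (z i)]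
          nlinarith [sq_nonneg m]
  rw [EuclideanSpace.norm_eq, EuclideanSpace.norm_eq]
  apply Real.sqrt_le_sqrt
  simpa [Real.norm_eq_abs, sq_abs, hz] using key
end

section
/- The ℓ₁ loss between logits controls the ℓ₁ distance between softmax outputs: for v, s : Fin K → ℝ, ∑_i |softmax(v)_i − softmax(s)_i| ≤ 2 ∑_i |v_i − s_i|. -/
open Finset

lemma exp_abs_sub_le (a b : ℝ) :
    |Real.exp a - Real.exp b| ≤ |a - b| * max (Real.exp a) (Real.exp b) := by
  wlog h : b ≤ a generalizing a b
  · have := this b a (le_of_not_ge h)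
    rwa [abs_sub_comm (Real.exp b), abs_sub_comm b a, max_comm] at this
  rw [abs_of_nonneg (sub_nonneg.2 (Real.exp_le_exp.2 h)),
      abs_of_nonneg (sub_nonneg.2 h), max_eq_left (Real.exp_le_exp.2 h)]
  have h1 := Real.add_one_le_exp (b - a)
  have h2 : Real.exp (b - a) * Real.exp a = Real.exp b := by
    rw [← Real.exp_add]; ring_nf
  nlinarith [Real.exp_pos a, Real.exp_pos b]

lemma softmax_key (K : ℕ) (hK : 1 ≤ K) (v s : Fin K → ℝ)
    (h : ∑ k, Real.exp (s k) ≤ ∑ k, Real.exp (v k)) :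
    ∑ i, |Real.exp (v i) / ∑ k, Real.exp (v k) - Real.exp (s i) / ∑ k, Real.exp (s k)|
      ≤ 2 * ∑ i, |v i - s i| := by
  haveI : NeZero K := ⟨by omega⟩
  set A := ∑ k, Real.exp (v k) with hA
  set B := ∑ k, Real.exp (s k) with hB
  have hBpos : 0 < B := Finset.sum_pos (fun k _ => Real.exp_pos _) ⟨0, mem_univ 0⟩
  have hApos : 0 < A := lt_of_lt_of_le hBpos h
  -- pointwise bound
  have hpt : ∀ i, |Real.exp (v i) / A - Real.exp (s i) / B|
      ≤ |Real.exp (v i) - Real.exp (s i)| / A + (Real.exp (s i) / B) * ((A - B) / A) := by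
    intro i
    have heq : Real.exp (v i) / A - Real.exp (s i) / B
        = (Real.exp (v i) - Real.exp (s i)) / A - (Real.exp (s i) / B) * ((A - B) / A) := by
      field_simp
      ring
    rw [heq]
    have h1 : |(Real.exp (v i) - Real.exp (s i)) / A| = |Real.exp (v i) - Real.exp (s i)| / A := by
      rw [abs_div, abs_of_pos hApos]
    calc _ ≤ |(Real.exp (v i) - Real.exp (s i)) / A| + |(Real.exp (s i) / B) * ((A - B) / A)| :=
          abs_sub _ _
      _ = |Real.exp (v i) - Real.exp (s i)| / A + (Real.exp (s i) / B) * ((A - B) / A) := by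
          rw [h1, abs_of_nonneg (mul_nonneg (by positivity)
            (div_nonneg (sub_nonneg.2 h) hApos.le))]
  have hsumq : ∑ i, Real.exp (s i) / B = 1 := by
    rw [← Finset.sum_div, ← hB, div_self hBpos.ne']
  have hAB : A - B ≤ ∑ i, |Real.exp (v i) - Real.exp (s i)| := by
    rw [hA, hB, ← Finset.sum_sub_distrib]
    exact Finset.sum_le_sum fun i _ => le_abs_self _
  have hDk : ∀ i, |Real.exp (v i) - Real.exp (s i)| ≤ |v i - s i| * A := by
    intro i
    refine (exp_abs_sub_le (v i) (s i)).trans ?_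
    have h1 : Real.exp (v i) ≤ A := Finset.single_le_sum (fun k _ => (Real.exp_pos _).le) (mem_univ i)
    have h2 : Real.exp (s i) ≤ B := Finset.single_le_sum (fun k _ => (Real.exp_pos _).le) (mem_univ i)
    have : max (Real.exp (v i)) (Real.exp (s i)) ≤ A := max_le h1 (h2.trans h)
    exact mul_le_mul_of_nonneg_left this (abs_nonneg _)
  calc ∑ i, |Real.exp (v i) / A - Real.exp (s i) / B|
      ≤ ∑ i, (|Real.exp (v i) - Real.exp (s i)| / A + (Real.exp (s i) / B) * ((A - B) / A)) :=
        Finset.sum_le_sum fun i _ => hpt i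
    _ = (∑ i, |Real.exp (v i) - Real.exp (s i)|) / A + (A - B) / A := by
        rw [Finset.sum_add_distrib, ← Finset.sum_div, ← Finset.sum_mul, hsumq, one_mul]
    _ ≤ (∑ i, |Real.exp (v i) - Real.exp (s i)|) / A
          + (∑ i, |Real.exp (v i) - Real.exp (s i)|) / A := by
        gcongr
    _ = 2 * ((∑ i, |Real.exp (v i) - Real.exp (s i)|) / A) := by ring
    _ ≤ 2 * ∑ i, |v i - s i| := by
        rw [mul_le_mul_iff_right₀ (by norm_num), div_le_iff₀ hApos, Finset.sum_mul]
        exact Finset.sum_le_sum fun i _ => hDk i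

/-- Softmax is 2-Lipschitz from logits (ℓ₁) to probabilities (ℓ₁):
`∑ |softmax(v)_i − softmax(s)_i| ≤ 2 ∑ |v_i − s_i|`. -/
theorem softmax_l1_lipschitz (K : ℕ) (hK : 1 ≤ K)
    (softmax : (Fin K → ℝ) → Fin K → ℝ)
    (hsm : ∀ v i, softmax v i = Real.exp (v i) / ∑ k, Real.exp (v k))
    (v s : Fin K → ℝ) :
    ∑ i, |softmax v i - softmax s i| ≤ 2 * ∑ i, |v i - s i| := by
  simp only [hsm]
  rcases le_total (∑ k, Real.exp (s k)) (∑ k, Real.exp (v k)) with h | h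
  · exact softmax_key K hK v s h
  · have := softmax_key K hK s v h
    have hv : (∑ i, |Real.exp (v i) / ∑ k, Real.exp (v k) - Real.exp (s i) / ∑ k, Real.exp (s k)|)
        = ∑ i, |Real.exp (s i) / ∑ k, Real.exp (s k) - Real.exp (v i) / ∑ k, Real.exp (v k)| :=
      Finset.sum_congr rfl fun i _ => abs_sub_comm _ _
    have hs2 : (∑ i, |v i - s i|) = ∑ i, |s i - v i| :=
      Finset.sum_congr rfl fun i _ => abs_sub_comm _ _
    rw [hv, hs2]; exact this
end
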